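/- For every L > 0 there exists ε > 0 such that the following holds: for every c ∈ [−L, L] and every h* with 1/L ≤ h* ≤ L, set J = −c·h* + h*²/2; then every 2π-periodic C³ function h : ℝ → ℝ with h(θ) > 0 for all θ, satisfying −c·h(θ) + h(θ)²/2 + h(θ)³·(h'(θ) + h'''(θ)) = J for all θ ∈ ℝ and |h(θ) − h*| ≤ ε for all θ, is a constant function, and its constant value x satisfies −c·x + x²/2 = J and |x − h*| ≤ ε. -/

import Mathlib

open Real

open Real MeasureTheory Set Function AddCircle

noncomputable section



lemma liftIco_eval {p : ℝ} [hfact : Fact (0 < p)] {B : Type*} (f : ℝ → B)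
    (hper : Function.Periodic f p) (θ : ℝ) :
    AddCircle.liftIco p 0 f (θ : AddCircle p) = f θ := by
  have h1 : toIcoMod hfact.out 0 θ ∈ Set.Ico (0:ℝ) (0 + p) := toIcoMod_mem_Ico hfact.out 0 θ
  have h2 : AddCircle.liftIco p 0 f ((toIcoMod hfact.out 0 θ : ℝ) : AddCircle p) = f (toIcoMod hfact.out 0 θ) :=
    AddCircle.liftIco_coe_apply h1
  have h3 : ((toIcoMod hfact.out 0 θ : ℝ) : AddCircle p) = (θ : AddCircle p) := by
    rw [← self_sub_toIcoDiv_zsmul hfact.out 0 θ]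
    have : ((toIcoDiv hfact.out 0 θ • p : ℝ) : AddCircle p) = 0 := by
      simp [QuotientAddGroup.mk_zsmul, AddCircle.coe_period]
    rw [AddCircle.coe_sub]  -- maybe not a lemma
    rw [this, sub_zero]
  have h4 : f (toIcoMod hfact.out 0 θ) = f θ := by
    rw [← self_sub_toIcoDiv_zsmul hfact.out 0 θ]
    exact hper.sub_zsmul_eq _
  rw [← h3, h2, h4]

lemma periodic_deriv' {f : ℝ → ℝ} {p : ℝ} (hper : Function.Periodic f p) :
    Function.Periodic (deriv f) p := by
  intro x
  have : (fun y => f (y + p)) = f := funext fun y => hper y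
  calc deriv f (x + p) = deriv (fun y => f (y + p)) x := (deriv_comp_add_const f p x).symm
  _ = deriv f x := by rw [this]




instance fact_two_pi_pos : Fact (0 < 2 * π) := ⟨Real.two_pi_pos⟩

lemma parseval_helper (g : C(AddCircle (2 * π), ℂ)) :
    Summable (fun n : ℤ => ‖fourierCoeff (⇑g) n‖ ^ 2) ∧
    ∑' n : ℤ, ‖fourierCoeff (⇑g) n‖ ^ 2
      = (1 / (2 * π)) * ∫ θ in (0:ℝ)..(0 + 2 * π), ‖g (θ : AddCircle (2 * π))‖ ^ 2 := by
  set F := ContinuousMap.toLp (E := ℂ) 2 haarAddCircle ℂ g with hF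
  have hmem : Memℓp (⇑(fourierBasis.repr F)) 2 := lp.memℓp _
  have hsum0 := hmem.summable (by norm_num)
  have hco : ∀ n : ℤ, fourierBasis.repr F n = fourierCoeff (⇑g) n := by
    intro n; rw [fourierBasis_repr, fourierCoeff_toLp]
  have hsum : Summable (fun n : ℤ => ‖fourierCoeff (⇑g) n‖ ^ 2) := by
    have : (fun n : ℤ => ‖fourierCoeff (⇑g) n‖ ^ 2)
        = fun n : ℤ => ‖fourierBasis.repr F n‖ ^ ((2 : ENNReal).toReal) := by
      funext n
      rw [hco n, ENNReal.toReal_ofNat, Real.rpow_two]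
    rw [this]
    exact hsum0
  refine ⟨hsum, ?_⟩
  have hP := tsum_sq_fourierCoeff F
  rw [hF] at hP
  simp only [fourierCoeff_toLp] at hP
  rw [← hF] at hP
  have hae : ∫ t, ‖F t‖ ^ 2 ∂haarAddCircle = ∫ t, ‖g t‖ ^ 2 ∂haarAddCircle := by
    apply integral_congr_ae
    filter_upwards [hF ▸ ContinuousMap.coeFn_toLp haarAddCircle g] with t ht
    rw [ht]
  have hvol : ∫ t : AddCircle (2 * π), ‖g t‖ ^ 2
      = (2 * π) * ∫ t, ‖g t‖ ^ 2 ∂haarAddCircle := by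
    rw [volume_eq_smul_haarAddCircle, integral_smul_measure,
      ENNReal.toReal_ofReal Real.two_pi_pos.le, smul_eq_mul]
  have hpre := AddCircle.intervalIntegral_preimage (2 * π) 0
    (fun t : AddCircle (2 * π) => ‖g t‖ ^ 2)
  rw [hP, hae, hpre, hvol]
  have : (2 : ℝ) * π ≠ 0 := Real.two_pi_pos.ne'
  field_simp


lemma fourier_rigidity (f : ℝ → ℝ) (hper : Function.Periodic f (2 * π))
    (hf : ContDiff ℝ 2 f)
    (hmean : ∫ θ in (0:ℝ)..(2 * π), f θ = 0)
    (heq : ∫ θ in (0:ℝ)..(2 * π), (f θ) ^ 2 = ∫ θ in (0:ℝ)..(2 * π), (deriv f θ) ^ 2) :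
    ∃ a b : ℝ, ∀ θ, f θ = a * Real.cos θ + b * Real.sin θ := by
  have h2pi : (0:ℝ) < 2 * π := Real.two_pi_pos
  have hdiff : Differentiable ℝ f := hf.differentiable (by norm_num)
  have hcont : Continuous f := hf.continuous
  have hf1 : ContDiff ℝ 1 (deriv f) := by
    have : ContDiff ℝ ((1 + 1 : ℕ) : WithTop ℕ∞) f := by norm_num; exact hf
    simpa using ContDiff.iterate_deriv' 1 1 this
  have hdiff' : Differentiable ℝ (deriv f) := hf1.differentiable (by norm_num)
  have hcont' : Continuous (deriv f) := hf1.continuous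
  have hper' : Function.Periodic (deriv f) (2 * π) := periodic_deriv' hper
  set fc : ℝ → ℂ := fun θ => ((f θ : ℝ) : ℂ) with hfc
  set fc' : ℝ → ℂ := fun θ => ((deriv f θ : ℝ) : ℂ) with hfc'
  have hfcper : Function.Periodic fc (2 * π) := fun x => by simp [hfc, hper x]
  have hfc'per : Function.Periodic fc' (2 * π) := fun x => by simp [hfc', hper' x]
  have hfccont : Continuous fc := Complex.continuous_ofReal.comp hcont
  have hfc'cont : Continuous fc' := Complex.continuous_ofReal.comp hcont'
  set G1 : C(AddCircle (2 * π), ℂ) :=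
    ⟨AddCircle.liftIco (2 * π) 0 fc, AddCircle.liftIco_zero_continuous
      (by simpa using (hfcper 0).symm) hfccont.continuousOn⟩ with hG1def
  set G2 : C(AddCircle (2 * π), ℂ) :=
    ⟨AddCircle.liftIco (2 * π) 0 fc', AddCircle.liftIco_zero_continuous
      (by simpa using (hfc'per 0).symm) hfc'cont.continuousOn⟩ with hG2def
  have hG1 : ∀ θ : ℝ, G1 (θ : AddCircle (2 * π)) = fc θ := fun θ => liftIco_eval fc hfcper θ
  have hG2 : ∀ θ : ℝ, G2 (θ : AddCircle (2 * π)) = fc' θ := fun θ => liftIco_eval fc' hfc'per θ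
  set c : ℤ → ℂ := fourierCoeff (⇑G1) with hc
  set c' : ℤ → ℂ := fourierCoeff (⇑G2) with hc'
  -- zeroth coefficients
  have hc0 : c 0 = 0 := by
    rw [hc, fourierCoeff_eq_intervalIntegral (⇑G1) 0 0]
    have : ∫ x in (0:ℝ)..(0 + 2 * π), fourier (-0) (x : AddCircle (2 * π)) • G1 (x : AddCircle (2 * π))
        = ∫ x in (0:ℝ)..(2 * π), fc x := by
      rw [zero_add]
      refine intervalIntegral.integral_congr fun x _ => ?_
      simp [hG1 x]
    rw [this]
    have : ∫ x in (0:ℝ)..(2 * π), fc x = ((∫ x in (0:ℝ)..(2 * π), f x : ℝ) : ℂ) := by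
      simp [hfc, intervalIntegral.integral_ofReal]
    rw [this, hmean]
    simp
  have hc'0 : c' 0 = 0 := by
    rw [hc', fourierCoeff_eq_intervalIntegral (⇑G2) 0 0]
    have h1 : ∫ x in (0:ℝ)..(0 + 2 * π), fourier (-0) (x : AddCircle (2 * π)) • G2 (x : AddCircle (2 * π))
        = ∫ x in (0:ℝ)..(2 * π), fc' x := by
      rw [zero_add]
      refine intervalIntegral.integral_congr fun x _ => ?_
      simp [hG2 x]
    rw [h1]
    have h2 : ∫ x in (0:ℝ)..(2 * π), fc' x = ((∫ x in (0:ℝ)..(2 * π), deriv f x : ℝ) : ℂ) := by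
      simp [hfc', intervalIntegral.integral_ofReal]
    have h3 : ∫ x in (0:ℝ)..(2 * π), deriv f x = f (2 * π) - f 0 :=
      intervalIntegral.integral_deriv_eq_sub (fun x _ => hdiff x) (hcont'.intervalIntegrable _ _)
    have h4 : f (2 * π) = f 0 := by simpa using hper 0
    rw [h2, h3, h4]
    simp
  -- derivative relation
  have hrel : ∀ n : ℤ, n ≠ 0 → c' n = Complex.I * n * c n := by
    intro n hn
    have hab : (0:ℝ) < 0 + 2 * π := lt_add_of_pos_right 0 h2pi
    have e1 : c n = fourierCoeffOn hab fc n := fourierCoeff_liftIco_eq fc n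
    have e2 : c' n = fourierCoeffOn hab fc' n := fourierCoeff_liftIco_eq fc' n
    have hd := fourierCoeffOn_of_hasDerivAt hab hn
      (f := fc) (f' := fc') (fun x _ => (hdiff x).hasDerivAt.ofReal_comp)
      (hfc'cont.intervalIntegrable _ _)
    have hfc20 : fc (0 + 2 * π) - fc 0 = 0 := by
      simp only [hfc]
      rw [hper 0]
      simp
    rw [hfc20, mul_zero, zero_sub, ← e1, ← e2] at hd
    have hpi : (π : ℂ) ≠ 0 := Complex.ofReal_ne_zero.mpr Real.pi_ne_zero
    have hnne : (n : ℂ) ≠ 0 := Int.cast_ne_zero.mpr hn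
    have hI : Complex.I ≠ 0 := Complex.I_ne_zero
    rw [hd]
    push_cast
    field_simp
    ring
  -- Parseval
  obtain ⟨hS1, hT1⟩ := parseval_helper G1
  obtain ⟨hS2, hT2⟩ := parseval_helper G2
  have hInt1 : ∫ θ in (0:ℝ)..(0 + 2 * π), ‖G1 (θ : AddCircle (2 * π))‖ ^ 2
      = ∫ θ in (0:ℝ)..(2 * π), (f θ) ^ 2 := by
    rw [zero_add]
    refine intervalIntegral.integral_congr fun x _ => ?_
    rw [hG1 x]
    simp [hfc, Complex.norm_real, Real.norm_eq_abs, sq_abs]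
  have hInt2 : ∫ θ in (0:ℝ)..(0 + 2 * π), ‖G2 (θ : AddCircle (2 * π))‖ ^ 2
      = ∫ θ in (0:ℝ)..(2 * π), (deriv f θ) ^ 2 := by
    rw [zero_add]
    refine intervalIntegral.integral_congr fun x _ => ?_
    rw [hG2 x]
    simp [hfc', Complex.norm_real, Real.norm_eq_abs, sq_abs]
  have hsum_eq : ∑' n : ℤ, ‖c n‖ ^ 2 = ∑' n : ℤ, ‖c' n‖ ^ 2 := by
    rw [hc, hc', hT1, hT2, hInt1, hInt2, heq]
  have hB : ∀ n : ℤ, ‖c' n‖ ^ 2 = (n : ℝ) ^ 2 * ‖c n‖ ^ 2 := by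
    intro n
    rcases eq_or_ne n 0 with rfl | hn
    · simp [hc'0]
    · rw [hrel n hn]
      have hno : ‖Complex.I * (n:ℂ) * c n‖ = |(n:ℝ)| * ‖c n‖ := by
        simp [norm_mul]
      rw [hno, mul_pow, sq_abs]
  have hS2' : Summable (fun n : ℤ => (n : ℝ) ^ 2 * ‖c n‖ ^ 2) := by
    have : (fun n : ℤ => (n : ℝ) ^ 2 * ‖c n‖ ^ 2) = fun n : ℤ => ‖c' n‖ ^ 2 :=
      funext fun n => (hB n).symm
    rw [this]; exact hS2
  set D : ℤ → ℝ := fun n => (n : ℝ) ^ 2 * ‖c n‖ ^ 2 - ‖c n‖ ^ 2 with hD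
  have hDsum : Summable D := hS2'.sub hS1
  have hDnn : ∀ n, 0 ≤ D n := by
    intro n
    rcases eq_or_ne n 0 with rfl | hn
    · simp [hD, hc0]
    · have h1 : (1 : ℝ) ≤ |(n : ℝ)| := by
        have := Int.one_le_abs hn
        calc (1:ℝ) = ((1:ℤ):ℝ) := by norm_num
        _ ≤ ((|n| : ℤ) : ℝ) := by exact_mod_cast this
        _ = |(n:ℝ)| := by push_cast; ring
      have h2 : (1 : ℝ) ≤ (n : ℝ) ^ 2 := by nlinarith [sq_abs (n:ℝ), abs_nonneg (n:ℝ)]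
      have h3 : (0 : ℝ) ≤ ‖c n‖ ^ 2 := sq_nonneg _
      simp only [hD]
      nlinarith
  have hDtsum : ∑' n, D n = 0 := by
    rw [hD]
    rw [Summable.tsum_sub hS2' hS1]
    have : ∑' n : ℤ, (n:ℝ) ^ 2 * ‖c n‖ ^ 2 = ∑' n : ℤ, ‖c' n‖ ^ 2 := by
      congr 1; exact funext fun n => (hB n).symm
    rw [this, ← hsum_eq, sub_self]
  have hvanish : ∀ n : ℤ, n ∉ ({-1, 1} : Finset ℤ) → c n = 0 := by
    intro n hn
    simp only [Finset.mem_insert, Finset.mem_singleton] at hn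
    push_neg at hn
    rcases eq_or_ne n 0 with rfl | hn0
    · exact hc0
    · have hDn : D n ≤ 0 := hDtsum ▸ Summable.le_tsum hDsum n fun j _ => hDnn j
      have hDn0 : D n = 0 := le_antisymm hDn (hDnn n)
      have h2 : (2 : ℝ) ≤ |(n : ℝ)| := by
        have h2' : (2:ℤ) ≤ |n| := by
          rw [Int.abs_eq_natAbs]
          have : 2 ≤ n.natAbs := by omega
          exact_mod_cast this
        calc (2:ℝ) = ((2:ℤ):ℝ) := by norm_num
        _ ≤ ((|n| : ℤ) : ℝ) := by exact_mod_cast h2'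
        _ = |(n:ℝ)| := by push_cast; ring
      have h3 : (1 : ℝ) < (n : ℝ) ^ 2 := by nlinarith [sq_abs (n:ℝ), abs_nonneg (n:ℝ)]
      have h4 : ‖c n‖ ^ 2 = 0 := by
        simp only [hD] at hDn0
        nlinarith [sq_nonneg ‖c n‖]
      simpa using pow_eq_zero_iff (n := 2) (by norm_num) |>.mp h4
  -- reconstruction
  have hsummable : Summable (fourierCoeff (⇑G1)) :=
    summable_of_ne_finset_zero (s := ({-1, 1} : Finset ℤ)) (fun n hn => hvanish n hn)
  refine ⟨(c (-1)).re + (c 1).re, (c (-1)).im - (c 1).im, fun θ => ?_⟩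
  have hps := has_pointwise_sum_fourier_series_of_summable hsummable ((θ : ℝ) : AddCircle (2 * π))
  have hfin : HasSum (fun i : ℤ => fourierCoeff (⇑G1) i • fourier i ((θ:ℝ) : AddCircle (2 * π)))
      (∑ i ∈ ({-1, 1} : Finset ℤ), fourierCoeff (⇑G1) i • fourier i ((θ:ℝ) : AddCircle (2 * π))) :=
    hasSum_sum_of_ne_finset_zero (fun n hn => by rw [← hc, hvanish n hn]; simp)
  have hkey : fc θ = c (-1) * fourier (-1) ((θ:ℝ) : AddCircle (2 * π))
      + c 1 * fourier 1 ((θ:ℝ) : AddCircle (2 * π)) := by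
    rw [← hG1 θ, ← hfin.unique hps, Finset.sum_pair (by decide : (-1 : ℤ) ≠ 1)]
    simp [hc, smul_eq_mul]
  have hfour : ∀ n : ℤ, (fourier n ((θ:ℝ) : AddCircle (2 * π)) : ℂ)
      = Complex.exp ((n : ℂ) * (θ : ℂ) * Complex.I) := by
    intro n
    rw [fourier_coe_apply]
    congr 1
    have hpi : (π : ℂ) ≠ 0 := Complex.ofReal_ne_zero.mpr Real.pi_ne_zero
    push_cast
    field_simp
  rw [hfour, hfour] at hkey
  have e1 : Complex.exp (((1:ℤ) : ℂ) * (θ:ℂ) * Complex.I)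
      = ((Real.cos θ : ℝ) : ℂ) + ((Real.sin θ : ℝ) : ℂ) * Complex.I := by
    have h1 : (((1:ℤ) : ℂ) * (θ:ℂ)) = ((θ : ℝ) : ℂ) := by push_cast; ring
    rw [h1, Complex.exp_mul_I]
    push_cast
    ring
  have e2 : Complex.exp (((-1:ℤ) : ℂ) * (θ:ℂ) * Complex.I)
      = ((Real.cos θ : ℝ) : ℂ) - ((Real.sin θ : ℝ) : ℂ) * Complex.I := by
    have h1 : (((-1:ℤ) : ℂ) * (θ:ℂ)) = -((θ : ℝ) : ℂ) := by push_cast; ring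
    rw [h1, Complex.exp_mul_I, Complex.cos_neg, Complex.sin_neg]
    push_cast
    ring
  rw [e1, e2] at hkey
  have := congrArg Complex.re hkey
  simp only [hfc, Complex.ofReal_re, Complex.add_re, Complex.mul_re, Complex.sub_re,
    Complex.sub_im, Complex.add_im, Complex.mul_im, Complex.ofReal_im, Complex.I_re,
    Complex.I_im] at this
  rw [this]
  ring

end

/-- Near-constant travelling waves of the thin-film equation are constant:
    any positive 2π-periodic C³ solution of −c·h + h²/2 + h³(h' + h''') = J
    with J = −c·h* + h*²/2 that stays ε-close to h* is a constant x with
    −c·x + x²/2 = J and |x − h*| ≤ ε. -/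
theorem stmt_6 (L : ℝ) (hL : 0 < L) :
    ∃ ε : ℝ, 0 < ε ∧
      ∀ c : ℝ, c ∈ Set.Icc (-L) L →
        ∀ hstar : ℝ, 1 / L ≤ hstar → hstar ≤ L →
          ∀ h : ℝ → ℝ, Function.Periodic h (2 * π) → ContDiff ℝ 3 h →
            (∀ θ, 0 < h θ) →
            (∀ θ, -c * h θ + (h θ) ^ 2 / 2
                + (h θ) ^ 3 * (deriv h θ + iteratedDeriv 3 h θ)
                = -c * hstar + hstar ^ 2 / 2) →
            (∀ θ : ℝ, |h θ - hstar| ≤ ε) →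
            ∃ x : ℝ, (∀ θ : ℝ, h θ = x) ∧
              -c * x + x ^ 2 / 2 = -c * hstar + hstar ^ 2 / 2 ∧
              |x - hstar| ≤ ε := by
  refine ⟨1, one_pos, ?_⟩
  intro c _ hstar _ _ h hper hC3 hpos heqn hclose
  set J : ℝ := -c * hstar + hstar ^ 2 / 2 with hJ
  -- smoothness bookkeeping
  have h31 : (3 : WithTop ℕ∞) = 2 + 1 := by norm_num
  have hC2 : ContDiff ℝ 2 (deriv h) := (contDiff_succ_iff_deriv.mp (h31 ▸ hC3)).2.2
  have h21 : (2 : WithTop ℕ∞) = 1 + 1 := by norm_num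
  have hC1 : ContDiff ℝ 1 (deriv (deriv h)) := (contDiff_succ_iff_deriv.mp (h21 ▸ hC2)).2.2
  have hd0 : Differentiable ℝ h := hC3.differentiable (by norm_num)
  have hd1 : Differentiable ℝ (deriv h) := hC2.differentiable (by norm_num)
  have hd2 : Differentiable ℝ (deriv (deriv h)) := hC1.differentiable (by norm_num)
  have hcont0 : Continuous h := hC3.continuous
  have hcont1 : Continuous (deriv h) := hC2.continuous
  have hcont2 : Continuous (deriv (deriv h)) := hC1.continuous
  have hcont3 : Continuous (deriv (deriv (deriv h))) := hC1.continuous_deriv le_rfl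
  have hiter : iteratedDeriv 3 h = deriv (deriv (deriv h)) := by
    rw [show (3:ℕ) = 2 + 1 from rfl, iteratedDeriv_succ,
      show (2:ℕ) = 1 + 1 from rfl, iteratedDeriv_succ, iteratedDeriv_one]
  have heqn' : ∀ θ, -c * h θ + (h θ) ^ 2 / 2
      + (h θ) ^ 3 * (deriv h θ + deriv (deriv (deriv h)) θ) = J := by
    intro θ; rw [← hiter]; exact heqn θ
  have hper1 : Function.Periodic (deriv h) (2 * π) := periodic_deriv' hper
  have hper2 : Function.Periodic (deriv (deriv h)) (2 * π) := periodic_deriv' hper1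
  have hy : ∀ θ, h θ ≠ 0 := fun θ => (hpos θ).ne'
  -- the integral identity ∫ h'^2 = ∫ h''^2
  set Ψ : ℝ → ℝ := fun θ => ((-J/2) * (h θ) ^ (-2:ℤ) + (-c) * (h θ) ^ (-1:ℤ)
      + (-(1/2)) * Real.log (h θ)) - deriv h θ * deriv (deriv h) θ with hΨdef
  have hΨ : ∀ θ, HasDerivAt Ψ ((deriv h θ) ^ 2 - (deriv (deriv h) θ) ^ 2) θ := by
    intro θ
    have hh : HasDerivAt h (deriv h θ) θ := (hd0 θ).hasDerivAt
    have hA1 : HasDerivAt (fun y : ℝ => (-J/2) * y ^ (-2:ℤ))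
        ((-J/2) * ((-2) * (h θ) ^ (-3:ℤ))) (h θ) := by
      simpa using (hasDerivAt_zpow (-2) (h θ) (Or.inl (hy θ))).const_mul (-J/2)
    have hA2 : HasDerivAt (fun y : ℝ => (-c) * y ^ (-1:ℤ))
        ((-c) * ((-1) * (h θ) ^ (-2:ℤ))) (h θ) := by
      simpa using (hasDerivAt_zpow (-1) (h θ) (Or.inl (hy θ))).const_mul (-c)
    have hA3 : HasDerivAt (fun y : ℝ => (-(1/2)) * Real.log y)
        ((-(1/2)) * (h θ)⁻¹) (h θ) := (Real.hasDerivAt_log (hy θ)).const_mul (-(1/2))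
    have hA : HasDerivAt (fun y : ℝ => (-J/2) * y ^ (-2:ℤ) + (-c) * y ^ (-1:ℤ)
        + (-(1/2)) * Real.log y)
        ((-J/2) * ((-2) * (h θ) ^ (-3:ℤ)) + (-c) * ((-1) * (h θ) ^ (-2:ℤ))
          + (-(1/2)) * (h θ)⁻¹) (h θ) := (hA1.add hA2).add hA3
    have hcomp := hA.comp θ hh
    have hmul : HasDerivAt (fun θ => deriv h θ * deriv (deriv h) θ)
        (deriv (deriv h) θ * deriv (deriv h) θ + deriv h θ * deriv (deriv (deriv h)) θ) θ :=
      ((hd1 θ).hasDerivAt).mul ((hd2 θ).hasDerivAt)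
    have := hcomp.sub hmul
    refine this.congr_deriv ?_
    have hkey : ((-J/2) * ((-2) * (h θ) ^ (-3:ℤ)) + (-c) * ((-1) * (h θ) ^ (-2:ℤ))
        + (-(1/2)) * (h θ)⁻¹) = deriv h θ + deriv (deriv (deriv h)) θ := by
      have he := heqn' θ
      have hy3 : (h θ) ^ 3 ≠ 0 := pow_ne_zero 3 (hy θ)
      have hu : deriv h θ + deriv (deriv (deriv h)) θ
          = (J + c * h θ - (h θ) ^ 2 / 2) / (h θ) ^ 3 := by
        rw [eq_div_iff hy3]
        linear_combination he
      rw [hu]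
      simp only [zpow_neg, zpow_ofNat]
      have hyθ := hy θ
      field_simp
      ring
    rw [hkey]
    ring
  have hFTC : ∫ θ in (0:ℝ)..(2 * π), ((deriv h θ) ^ 2 - (deriv (deriv h) θ) ^ 2)
      = Ψ (2 * π) - Ψ 0 :=
    intervalIntegral.integral_eq_sub_of_hasDerivAt (fun θ _ => hΨ θ)
      (((hcont1.pow 2).sub (hcont2.pow 2)).intervalIntegrable _ _)
  have hΨper : Ψ (2 * π) = Ψ 0 := by
    have e0 : Ψ (0 + 2 * π) = Ψ (2 * π) := by rw [zero_add]
    rw [← e0, hΨdef]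
    simp only []
    rw [hper 0, hper1 0, hper2 0]
  have hzero : ∫ θ in (0:ℝ)..(2 * π), ((deriv h θ) ^ 2 - (deriv (deriv h) θ) ^ 2) = 0 := by
    rw [hFTC, hΨper, sub_self]
  have heq2 : ∫ θ in (0:ℝ)..(2 * π), (deriv h θ) ^ 2
      = ∫ θ in (0:ℝ)..(2 * π), (deriv (deriv h) θ) ^ 2 := by
    have hsub := intervalIntegral.integral_sub
      ((hcont1.pow 2).intervalIntegrable (μ := MeasureTheory.volume) (0:ℝ) (2 * π))
      ((hcont2.pow 2).intervalIntegrable (μ := MeasureTheory.volume) (0:ℝ) (2 * π))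
    simp only [Pi.pow_apply] at hsub
    rw [hsub] at hzero
    linarith [hzero]
  have hmean : ∫ θ in (0:ℝ)..(2 * π), deriv h θ = 0 := by
    have := intervalIntegral.integral_deriv_eq_sub (f := h) (a := (0:ℝ)) (b := 2 * π)
      (fun x _ => hd0 x) (hcont1.intervalIntegrable (μ := MeasureTheory.volume) _ _)
    rw [this]
    have h20 : h (2 * π) = h 0 := by
      have := hper 0
      rwa [zero_add] at this
    rw [h20, sub_self]
  obtain ⟨a, b, hab⟩ := fourier_rigidity (deriv h) hper1 hC2 hmean heq2
  -- compute second and third derivatives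
  have hfun : deriv h = fun θ => a * Real.cos θ + b * Real.sin θ := funext hab
  have hd2' : deriv (deriv h) = fun θ => a * (-Real.sin θ) + b * Real.cos θ := by
    funext θ
    rw [hfun]
    exact (((Real.hasDerivAt_cos θ).const_mul a).add
      ((Real.hasDerivAt_sin θ).const_mul b)).deriv
  have hd3' : ∀ θ, deriv (deriv (deriv h)) θ = -(deriv h θ) := by
    intro θ
    rw [hd2']
    have : HasDerivAt (fun θ => a * (-Real.sin θ) + b * Real.cos θ)
        (a * (-Real.cos θ) + b * (-Real.sin θ)) θ := by
      have h1 : HasDerivAt (fun θ : ℝ => -Real.sin θ) (-Real.cos θ) θ :=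
        (Real.hasDerivAt_sin θ).neg
      exact ((h1.const_mul a).add ((Real.hasDerivAt_cos θ).const_mul b))
    rw [this.deriv, hfun]
    ring
  -- the profile equation forces the quadratic pointwise
  have hroot : ∀ θ, -c * h θ + (h θ) ^ 2 / 2 = J := by
    intro θ
    have := heqn' θ
    rw [hd3' θ] at this
    have hz : deriv h θ + -(deriv h θ) = 0 := by ring
    rw [hz, mul_zero, add_zero] at this
    exact this
  have hfact : ∀ θ, (h θ - hstar) * (h θ + hstar - 2 * c) = 0 := by
    intro θ
    have := hroot θ
    rw [hJ] at this
    nlinarith [this]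
  -- constancy via intermediate value theorem
  have hval : ∀ θ, h θ = hstar ∨ h θ = 2 * c - hstar := by
    intro θ
    rcases mul_eq_zero.mp (hfact θ) with h1 | h1
    · left; linarith [h1]
    · right; linarith [h1]
  have hconst : ∀ θ, h θ = h 0 := by
    intro θ
    by_contra hne
    have hsum2c : h 0 + h θ = 2 * c := by
      rcases hval 0 with e0 | e0 <;> rcases hval θ with e1 | e1
      · exact absurd (e1.trans e0.symm) hne
      · rw [e0, e1]; ring
      · rw [e0, e1]; ring
      · exact absurd (e1.trans e0.symm) hne
    have hstarne : hstar ≠ c := by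
      intro hsc
      apply hne
      have hr : 2 * c - hstar = hstar := by rw [hsc]; ring
      rcases hval θ with e1 | e1 <;> rcases hval 0 with e0 | e0 <;>
        rw [e1, e0] <;> linarith [hr]
    have hcmem : c ∈ Set.uIcc (h 0) (h θ) := by
      rw [Set.mem_uIcc]
      rcases le_total (h 0) (h θ) with hle | hle
      · left; constructor <;> linarith
      · right; constructor <;> linarith
    obtain ⟨ξ, _, hξ⟩ := intermediate_value_uIcc (hcont0.continuousOn) hcmem
    have := hfact ξ
    rw [hξ] at this
    have : (c - hstar) ^ 2 = 0 := by nlinarith [this]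
    have : c = hstar := by nlinarith [this]
    exact hstarne this.symm
  exact ⟨h 0, hconst, hroot 0, hclose 0⟩
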